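/- Let d ∈ ℕ, m ≥ 1 a natural number, U ∈ [0,1] a real number, and x ∈ ℝ^d with ‖x‖₂ ≤ U. Then √(m/4) ≤ ‖P(x)‖₂ ≤ √(m/4 + U^{2^{m+1}}). -/

import Mathlib

/-- The preprocessing transformation P : ℝ^d → ℝ^{d+m},
P(x) = [x; 1/2 − ‖x‖₂^{2^1}; 1/2 − ‖x‖₂^{2^2}; …; 1/2 − ‖x‖₂^{2^m}]. -/
noncomputable def preprocess (d m : ℕ) (x : EuclideanSpace ℝ (Fin d)) :
    EuclideanSpace ℝ (Fin (d + m)) :=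
  WithLp.toLp 2 fun (i : Fin (d + m)) => if h : (i : ℕ) < d then x ⟨i, h⟩
    else 1 / 2 - ‖x‖ ^ (2 ^ ((i : ℕ) - d + 1))

/-- The squared norm of `preprocess d m x` telescopes exactly to
`m/4 + ‖x‖^(2^(m+1))`. -/
lemma norm_preprocess_eq (d m : ℕ) (x : EuclideanSpace ℝ (Fin d)) :
    ‖preprocess d m x‖ = Real.sqrt ((m : ℝ) / 4 + ‖x‖ ^ (2 ^ (m + 1))) := by
  rw [EuclideanSpace.norm_eq]
  congr 1
  simp only [Real.norm_eq_abs, sq_abs]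
  rw [Fin.sum_univ_add]
  have h1 : ∀ i : Fin d, preprocess d m x (Fin.castAdd m i) = x i := by
    intro i
    simp [preprocess, Fin.castAdd, i.isLt]
  have h2 : ∀ i : Fin m, preprocess d m x (Fin.natAdd d i) =
      1 / 2 - ‖x‖ ^ (2 ^ ((i : ℕ) + 1)) := by
    intro i
    simp [preprocess, Fin.natAdd]
  simp only [h1, h2]
  have hx2 : ∑ i : Fin d, x i ^ 2 = ‖x‖ ^ 2 := by
    rw [EuclideanSpace.norm_eq, Real.sq_sqrt]
    · simp [sq_abs]
    · positivity
  rw [hx2, Fin.sum_univ_eq_sum_range (fun i => (1 / 2 - ‖x‖ ^ (2 ^ (i + 1))) ^ 2)]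
  set t := ‖x‖ with ht
  have key : ∀ i ∈ Finset.range m, (1 / 2 - t ^ (2 ^ (i + 1))) ^ 2 =
      1 / 4 + ((t ^ (2 ^ (i + 2)) ) - t ^ (2 ^ (i + 1))) := by
    intro i _
    have : (t ^ (2 ^ (i + 1))) ^ 2 = t ^ (2 ^ (i + 2)) := by
      rw [← pow_mul]; ring_nf
    nlinarith [this]
  rw [Finset.sum_congr rfl key, Finset.sum_add_distrib]
  have tel : ∑ i ∈ Finset.range m, (t ^ (2 ^ (i + 2)) - t ^ (2 ^ (i + 1))) =
      t ^ (2 ^ (m + 1)) - t ^ 2 := by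
    have := Finset.sum_range_sub (fun i => t ^ (2 ^ (i + 1))) m
    simpa using this
  rw [tel]
  simp only [Finset.sum_const, Finset.card_range, nsmul_eq_mul]
  ring

/-- for m ≥ 1, U ∈ [0,1] and ‖x‖₂ ≤ U,
√(m/4) ≤ ‖P(x)‖₂ ≤ √(m/4 + U^{2^{m+1}}). -/
theorem norm_preprocess_bounds (d m : ℕ) (hm : 1 ≤ m)
    (U : ℝ) (hU : U ∈ Set.Icc (0 : ℝ) 1)
    (x : EuclideanSpace ℝ (Fin d)) (hx : ‖x‖ ≤ U) :
    Real.sqrt ((m : ℝ) / 4) ≤ ‖preprocess d m x‖ ∧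
      ‖preprocess d m x‖ ≤ Real.sqrt ((m : ℝ) / 4 + U ^ (2 ^ (m + 1))) := by
  rw [norm_preprocess_eq]
  constructor
  · apply Real.sqrt_le_sqrt
    have : (0:ℝ) ≤ ‖x‖ ^ (2 ^ (m + 1)) := by positivity
    linarith
  · apply Real.sqrt_le_sqrt
    have : ‖x‖ ^ (2 ^ (m + 1)) ≤ U ^ (2 ^ (m + 1)) :=
      pow_le_pow_left₀ (norm_nonneg x) hx _
    linarith
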